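/- For each i, j ∈ {1,…,N}, the function I_{ij}(q,p) = pᵢpⱼ − (2λ H_λ(q,p) − ω²) qᵢqⱼ is a constant of motion for H_λ, i.e. the canonical Poisson bracket {I_{ij}, H_λ} vanishes wherever 1 + λq² ≠ 0. -/

import Mathlib

open Filter Topology

noncomputable def Hlam {N : ℕ} (lam om : ℝ) (q p : Fin N → ℝ) : ℝ :=
  ((∑ i, p i ^ 2) + om ^ 2 * ∑ i, q i ^ 2) / (2 * (1 + lam * ∑ i, q i ^ 2))


noncomputable def pbracket {N : ℕ} (F G : (Fin N → ℝ) → (Fin N → ℝ) → ℝ)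
    (q p : Fin N → ℝ) : ℝ :=
  ∑ k, (deriv (fun t => F (Function.update q k t) p) (q k)
          * deriv (fun t => G q (Function.update p k t)) (p k)
        - deriv (fun t => F q (Function.update p k t)) (p k)
          * deriv (fun t => G (Function.update q k t) p) (q k))

set_option maxHeartbeats 2000000 in
theorem stmt_1 {N : ℕ} (lam om : ℝ) (i j : Fin N) (q p : Fin N → ℝ)
    (h : 1 + lam * ∑ k, q k ^ 2 ≠ 0) :
    pbracket
      (fun q p => p i * p j - (2 * lam * Hlam lam om q p - om ^ 2) * (q i * q j))
      (Hlam lam om) q p = 0 := by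
  classical
  set S := ∑ k, q k ^ 2 with hS
  set P := ∑ k, p k ^ 2 with hP
  have hA : (1 + lam * S) ≠ 0 := h
  have h2A : (2 * (1 + lam * S)) ≠ 0 := mul_ne_zero two_ne_zero hA
  have hsum : ∀ (v : Fin N → ℝ) (k : Fin N) (t : ℝ),
      (∑ m, Function.update v k t m ^ 2) = t ^ 2 + ((∑ m, v m ^ 2) - v k ^ 2) := by
    intro v k t
    have h1 : (fun m => Function.update v k t m ^ 2)
        = Function.update (fun m => v m ^ 2) k (t ^ 2) := by
      ext m
      rcases eq_or_ne m k with rfl | hm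
      · simp
      · simp [Function.update_of_ne hm]
    calc (∑ m, Function.update v k t m ^ 2)
        = ∑ m, Function.update (fun m => v m ^ 2) k (t ^ 2) m := by rw [h1]
      _ = t ^ 2 + ∑ m ∈ Finset.univ \ {k}, v m ^ 2 :=
          Finset.sum_update_of_mem (Finset.mem_univ k) _ _
      _ = t ^ 2 + ((∑ m, v m ^ 2) - v k ^ 2) := by
          rw [← Finset.erase_eq, Finset.sum_erase_eq_sub (Finset.mem_univ k)]
  have hu : ∀ (v : Fin N → ℝ) (k m : Fin N),
      HasDerivAt (fun t => Function.update v k t m) (if m = k then 1 else 0) (v k) := by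
    intro v k m
    rcases eq_or_ne m k with rfl | hm
    · simp only [Function.update_self, if_pos rfl]
      exact hasDerivAt_id _
    · simp only [Function.update_of_ne hm, if_neg hm]
      exact hasDerivAt_const _ _
  have htsq : ∀ x : ℝ, HasDerivAt (fun t : ℝ => t ^ 2) (2 * x) x := by
    intro x
    simpa using hasDerivAt_pow 2 x
  have hDq : ∀ k, HasDerivAt (fun t => Hlam lam om (Function.update q k t) p)
      (q k * (om ^ 2 - lam * P) / (1 + lam * S) ^ 2) (q k) := by
    intro k
    have hfe : (fun t => Hlam lam om (Function.update q k t) p)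
        = fun t => (P + om ^ 2 * (t ^ 2 + (S - q k ^ 2)))
            / (2 * (1 + lam * (t ^ 2 + (S - q k ^ 2)))) := by
      funext t
      simp only [Hlam, hsum q k t, ← hS, ← hP]
    rw [hfe]
    have hq : q k ^ 2 + (S - q k ^ 2) = S := by ring
    have hden0 : 2 * (1 + lam * (q k ^ 2 + (S - q k ^ 2))) ≠ 0 := by
      rw [hq]; exact h2A
    have hnum : HasDerivAt (fun t : ℝ => P + om ^ 2 * (t ^ 2 + (S - q k ^ 2)))
        (om ^ 2 * (2 * q k)) (q k) := (((htsq (q k)).add_const _).const_mul _).const_add _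
    have hd : HasDerivAt (fun t : ℝ => 2 * (1 + lam * (t ^ 2 + (S - q k ^ 2))))
        (2 * (lam * (2 * q k))) (q k) :=
      ((((htsq (q k)).add_const _).const_mul lam).const_add 1).const_mul 2
    have hdiv := hnum.div hd hden0
    refine hdiv.congr_deriv ?_
    rw [hq]
    field_simp
    ring
  have hHp : ∀ k, HasDerivAt (fun t => Hlam lam om q (Function.update p k t))
      (p k / (1 + lam * S)) (p k) := by
    intro k
    have hfe : (fun t => Hlam lam om q (Function.update p k t))
        = fun t => ((t ^ 2 + (P - p k ^ 2)) + om ^ 2 * S) / (2 * (1 + lam * S)) := by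
      funext t
      simp only [Hlam, hsum p k t, ← hS, ← hP]
    rw [hfe]
    have hdiv := (((htsq (p k)).add_const (P - p k ^ 2)).add_const (om ^ 2 * S)).div_const
        (2 * (1 + lam * S))
    refine hdiv.congr_deriv ?_
    field_simp
  have hFq : ∀ k, HasDerivAt (fun t => p i * p j
        - (2 * lam * Hlam lam om (Function.update q k t) p - om ^ 2)
          * (Function.update q k t i * Function.update q k t j))
      (0 - ((2 * lam * (q k * (om ^ 2 - lam * P) / (1 + lam * S) ^ 2)) * (q i * q j)
        + (2 * lam * Hlam lam om q p - om ^ 2)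
          * ((if i = k then 1 else 0) * q j + q i * (if j = k then 1 else 0)))) (q k) := by
    intro k
    have H := (hasDerivAt_const (q k) (p i * p j)).sub
      ((((hDq k).const_mul (2 * lam)).sub_const (om ^ 2)).mul ((hu q k i).mul (hu q k j)))
    refine H.congr_deriv ?_
    simp [Function.update_eq_self]
  have hFp : ∀ k, HasDerivAt (fun t => Function.update p k t i * Function.update p k t j
        - (2 * lam * Hlam lam om q (Function.update p k t) - om ^ 2) * (q i * q j))
      (((if i = k then 1 else 0) * p j + p i * (if j = k then 1 else 0))
        - (2 * lam * (p k / (1 + lam * S))) * (q i * q j)) (p k) := by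
    intro k
    have H := ((hu p k i).mul (hu p k j)).sub
      ((((hHp k).const_mul (2 * lam)).sub_const (om ^ 2)).mul_const (q i * q j))
    refine H.congr_deriv ?_
    simp [Function.update_eq_self]
  have key : ∀ k : Fin N,
      deriv (fun t => p i * p j
          - (2 * lam * Hlam lam om (Function.update q k t) p - om ^ 2)
            * (Function.update q k t i * Function.update q k t j)) (q k)
        * deriv (fun t => Hlam lam om q (Function.update p k t)) (p k)
      - deriv (fun t => Function.update p k t i * Function.update p k t j
          - (2 * lam * Hlam lam om q (Function.update p k t) - om ^ 2) * (q i * q j)) (p k)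
        * deriv (fun t => Hlam lam om (Function.update q k t) p) (q k)
      = (if i = k then 1 else 0)
          * ((om ^ 2 - lam * P) / (1 + lam * S) ^ 2 * (p k * q j - q k * p j))
        + (if j = k then 1 else 0)
          * ((om ^ 2 - lam * P) / (1 + lam * S) ^ 2 * (p k * q i - q k * p i)) := by
    intro k
    rw [(hFq k).deriv, (hHp k).deriv, (hFp k).deriv, (hDq k).deriv]
    have hH0 : Hlam lam om q p = (P + om ^ 2 * S) / (2 * (1 + lam * S)) := by
      simp only [Hlam, ← hS, ← hP]
    rw [hH0]
    by_cases hik : i = k <;> by_cases hjk : j = k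
    · simp only [if_pos hik, if_pos hjk]
      field_simp
      ring
    · simp only [if_pos hik, if_neg hjk]
      field_simp
      ring
    · simp only [if_neg hik, if_pos hjk]
      field_simp
      ring
    · simp only [if_neg hik, if_neg hjk]
      field_simp
      ring
  simp only [pbracket]
  rw [Finset.sum_congr rfl fun k _ => key k, Finset.sum_add_distrib]
  simp [ite_mul, Finset.sum_ite_eq]
  ring
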